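/- Assume the linear model y = X𝐰 + ε with subgaussian noise (constant τ, variances ≥ σ²), bounded design (‖xᵢ‖_∞ ≤ M), and Q = (1/n)XᵀX invertible. If μ ≥ 2M²‖𝐰‖₁, then the probability that ŵ = 0 (where ŵ minimizes (1/2n)‖y − Xw‖₂² + μ‖w‖₁) is at least 1 − 2p·exp(−n μ²/(8 M²σ²·(τ/σ)²)). -/

import Mathlib

open MeasureTheory ProbabilityTheory Matrix Real

lemma tail_bound {Ω : Type*} [MeasureSpace Ω] [IsProbabilityMeasure (ℙ : Measure Ω)]
    (n : ℕ) (M τ : ℝ) (hM : 0 < M) (hτ : 0 < τ)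
    (ε : Fin n → Ω → ℝ) (hmeas : ∀ i, Measurable (ε i))
    (hindep : iIndepFun ε ℙ)
    (hint : ∀ i (s : ℝ), Integrable (fun ω => Real.exp (s * ε i ω)) ℙ)
    (hsub : ∀ i (s : ℝ), ∫ ω, Real.exp (s * ε i ω) ∂ℙ ≤ Real.exp (s ^ 2 * τ ^ 2 / 2))
    (a : Fin n → ℝ) (ha : ∀ i, |a i| ≤ M) (μ : ℝ) (hμ0 : 0 ≤ μ) :
    ℙ {ω | (n : ℝ) * μ / 2 ≤ ∑ i, a i * ε i ω} ≤
      ENNReal.ofReal (Real.exp (-((n : ℝ) * μ ^ 2) / (8 * M ^ 2 * τ ^ 2))) := by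
  set t : ℝ := μ / (2 * M ^ 2 * τ ^ 2) with ht_def
  have ht : 0 ≤ t := by positivity
  set Z : Fin n → Ω → ℝ := fun i ω => a i * ε i ω with hZ
  have hZmeas : ∀ i, Measurable (Z i) := fun i => (hmeas i).const_mul (a i)
  have hZindep : iIndepFun Z ℙ :=
    hindep.comp (fun i x => a i * x) (fun i => measurable_const_mul (a i))
  have hZint : ∀ i ∈ Finset.univ, Integrable (fun ω => Real.exp (t * Z i ω)) ℙ := by
    intro i _
    simpa [hZ, mul_assoc] using hint i (t * a i)
  have hInt : Integrable (fun ω => Real.exp (t * (∑ i, Z i) ω)) ℙ :=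
    hZindep.integrable_exp_mul_sum hZmeas hZint
  have hmgf_i : ∀ i, mgf (Z i) ℙ t ≤ Real.exp (t ^ 2 * M ^ 2 * τ ^ 2 / 2) := by
    intro i
    have h1 : mgf (Z i) ℙ t = ∫ ω, Real.exp ((t * a i) * ε i ω) ∂ℙ := by
      simp only [mgf, hZ]
      congr 1; funext ω; ring_nf
    rw [h1]
    refine (hsub i (t * a i)).trans ?_
    apply Real.exp_le_exp.mpr
    have : (t * a i) ^ 2 ≤ t ^ 2 * M ^ 2 := by
      rw [mul_pow]
      have : (a i) ^ 2 ≤ M ^ 2 := by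
        rw [← sq_abs]
        exact pow_le_pow_left₀ (abs_nonneg _) (ha i) 2
      nlinarith [sq_nonneg t]
    nlinarith [sq_nonneg τ]
  have hmgf : mgf (∑ i, Z i) ℙ t ≤ Real.exp ((n : ℝ) * (t ^ 2 * M ^ 2 * τ ^ 2 / 2)) := by
    rw [hZindep.mgf_sum hZmeas Finset.univ]
    calc ∏ i, mgf (Z i) ℙ t ≤ ∏ _i : Fin n, Real.exp (t ^ 2 * M ^ 2 * τ ^ 2 / 2) :=
          Finset.prod_le_prod (fun i _ => mgf_nonneg) (fun i _ => hmgf_i i)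
      _ = Real.exp ((n : ℝ) * (t ^ 2 * M ^ 2 * τ ^ 2 / 2)) := by
          rw [Finset.prod_const, Real.exp_nat_mul, Finset.card_univ, Fintype.card_fin]
  have hkey := measure_ge_le_exp_mul_mgf (μ := ℙ) (X := ∑ i, Z i) ((n : ℝ) * μ / 2) ht hInt
  have hbound : Real.exp (-t * ((n : ℝ) * μ / 2)) * mgf (∑ i, Z i) ℙ t ≤
      Real.exp (-((n : ℝ) * μ ^ 2) / (8 * M ^ 2 * τ ^ 2)) := by
    calc Real.exp (-t * ((n : ℝ) * μ / 2)) * mgf (∑ i, Z i) ℙ t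
        ≤ Real.exp (-t * ((n : ℝ) * μ / 2)) * Real.exp ((n : ℝ) * (t ^ 2 * M ^ 2 * τ ^ 2 / 2)) := by
          exact mul_le_mul_of_nonneg_left hmgf (Real.exp_nonneg _)
      _ = Real.exp (-t * ((n : ℝ) * μ / 2) + (n : ℝ) * (t ^ 2 * M ^ 2 * τ ^ 2 / 2)) :=
          (Real.exp_add _ _).symm
      _ = Real.exp (-((n : ℝ) * μ ^ 2) / (8 * M ^ 2 * τ ^ 2)) := by
          congr 1
          rw [ht_def]
          field_simp
          ring
  have hsetEq : {ω | (n : ℝ) * μ / 2 ≤ ∑ i, a i * ε i ω} =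
      {ω | (n : ℝ) * μ / 2 ≤ (∑ i, Z i) ω} := by
    ext ω; simp [hZ, Finset.sum_apply]
  rw [hsetEq]
  have := hkey.trans hbound
  calc ℙ {ω | (n : ℝ) * μ / 2 ≤ (∑ i, Z i) ω}
      = ENNReal.ofReal (ℙ {ω | (n : ℝ) * μ / 2 ≤ (∑ i, Z i) ω}).toReal :=
        (ENNReal.ofReal_toReal (measure_ne_top _ _)).symm
    _ ≤ ENNReal.ofReal (Real.exp (-((n : ℝ) * μ ^ 2) / (8 * M ^ 2 * τ ^ 2))) :=
        ENNReal.ofReal_le_ofReal this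


lemma lasso_zero {n p : ℕ} (hn : 0 < n) (M : ℝ) (hM : 0 < M)
    (X : Matrix (Fin n) (Fin p) ℝ) (hX : ∀ i j, |X i j| ≤ M)
    (hQ : IsUnit (((1 : ℝ) / n) • (Xᵀ * X)).det)
    (w : Fin p → ℝ) (μ : ℝ) (hμ : 2 * M ^ 2 * (∑ j, |w j|) ≤ μ)
    (e : Fin n → ℝ) (hE : ∀ j, |∑ i, X i j * e i| ≤ (n : ℝ) * μ / 2)
    (u : Fin p → ℝ)
    (hmin : ∀ v : Fin p → ℝ,
      (1 / (2 * n) : ℝ) * (∑ i, (X.mulVec w i + e i - X.mulVec u i) ^ 2)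
          + μ * ∑ j, |u j| ≤
        (1 / (2 * n) : ℝ) * (∑ i, (X.mulVec w i + e i - X.mulVec v i) ^ 2)
          + μ * ∑ j, |v j|) :
    u = 0 := by
  have hnR : (0 : ℝ) < n := by exact_mod_cast hn
  have hd : (0 : ℝ) < 1 / (2 * (n : ℝ)) := by positivity
  have hmv : ∀ (v : Fin p → ℝ) i, X.mulVec v i = ∑ j, X i j * v j := fun v i => by
    simp [Matrix.mulVec, dotProduct]
  -- bound on correlations with y
  have hc : ∀ j, |∑ i, X i j * (X.mulVec w i + e i)| ≤ (n : ℝ) * μ := by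
    intro j
    have hXw : ∀ i, |X.mulVec w i| ≤ M * ∑ k, |w k| := by
      intro i
      rw [hmv]
      calc |∑ k, X i k * w k| ≤ ∑ k, |X i k * w k| := Finset.abs_sum_le_sum_abs _ _
        _ ≤ ∑ k, M * |w k| := Finset.sum_le_sum fun k _ => by
            rw [abs_mul]; exact mul_le_mul_of_nonneg_right (hX i k) (abs_nonneg _)
        _ = M * ∑ k, |w k| := by rw [← Finset.mul_sum]
    have h1 : |∑ i, X i j * X.mulVec w i| ≤ (n : ℝ) * (M * (M * ∑ k, |w k|)) := by
      calc |∑ i, X i j * X.mulVec w i| ≤ ∑ i, |X i j * X.mulVec w i| :=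
            Finset.abs_sum_le_sum_abs _ _
        _ ≤ ∑ _i : Fin n, M * (M * ∑ k, |w k|) := Finset.sum_le_sum fun i _ => by
            rw [abs_mul]
            exact mul_le_mul (hX i j) (hXw i) (abs_nonneg _) hM.le
        _ = (n : ℝ) * (M * (M * ∑ k, |w k|)) := by
            rw [Finset.sum_const, Finset.card_univ, Fintype.card_fin, nsmul_eq_mul]
    have h2 := hE j
    have hsplit : ∑ i, X i j * (X.mulVec w i + e i)
        = (∑ i, X i j * X.mulVec w i) + ∑ i, X i j * e i := by
      rw [← Finset.sum_add_distrib]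
      exact Finset.sum_congr rfl fun i _ => by ring
    have habs : |∑ i, X i j * (X.mulVec w i + e i)|
        ≤ |∑ i, X i j * X.mulVec w i| + |∑ i, X i j * e i| := by
      rw [hsplit]; exact abs_add_le _ _
    have hMW : (n : ℝ) * (M * (M * ∑ k, |w k|)) ≤ (n : ℝ) * (μ / 2) := by
      apply mul_le_mul_of_nonneg_left _ hnR.le
      nlinarith
    linarith
  -- expansion of the quadratic at u
  have hswap : ∑ i, (X.mulVec w i + e i) * X.mulVec u i
      = ∑ j, u j * ∑ i, X i j * (X.mulVec w i + e i) := by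
    calc ∑ i, (X.mulVec w i + e i) * X.mulVec u i
        = ∑ i, ∑ j, (X.mulVec w i + e i) * (X i j * u j) := by
          refine Finset.sum_congr rfl fun i _ => ?_
          rw [hmv u i, Finset.mul_sum]
      _ = ∑ j, ∑ i, (X.mulVec w i + e i) * (X i j * u j) := Finset.sum_comm
      _ = ∑ j, u j * ∑ i, X i j * (X.mulVec w i + e i) := by
          refine Finset.sum_congr rfl fun j _ => ?_
          rw [Finset.mul_sum]
          exact Finset.sum_congr rfl fun i _ => by ring
  have hexp : ∑ i, (X.mulVec w i + e i - X.mulVec u i) ^ 2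
      = (∑ i, (X.mulVec w i + e i) ^ 2)
        - 2 * (∑ j, u j * ∑ i, X i j * (X.mulVec w i + e i))
        + ∑ i, (X.mulVec u i) ^ 2 := by
    rw [← hswap, Finset.mul_sum, ← Finset.sum_sub_distrib, ← Finset.sum_add_distrib]
    exact Finset.sum_congr rfl fun i _ => by ring
  -- the inner-product bound
  have hS : ∑ j, u j * ∑ i, X i j * (X.mulVec w i + e i)
      ≤ (n : ℝ) * μ * ∑ j, |u j| := by
    calc ∑ j, u j * ∑ i, X i j * (X.mulVec w i + e i)
        ≤ ∑ j, |u j * ∑ i, X i j * (X.mulVec w i + e i)| :=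
          Finset.sum_le_sum fun j _ => le_abs_self _
      _ ≤ ∑ j, |u j| * ((n : ℝ) * μ) := Finset.sum_le_sum fun j _ => by
          rw [abs_mul]; exact mul_le_mul_of_nonneg_left (hc j) (abs_nonneg _)
      _ = (n : ℝ) * μ * ∑ j, |u j| := by rw [← Finset.sum_mul]; ring
  have hC : (0 : ℝ) ≤ ∑ i, (X.mulVec u i) ^ 2 :=
    Finset.sum_nonneg fun i _ => sq_nonneg _
  -- h2 : g 0 ≤ g u
  have hid : (1 / (2 * (n : ℝ))) * (2 * ((n : ℝ) * μ * ∑ j, |u j|)) = μ * ∑ j, |u j| := by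
    field_simp
  have hdS : (1 / (2 * (n : ℝ))) * (2 * (∑ j, u j * ∑ i, X i j * (X.mulVec w i + e i)))
      ≤ μ * ∑ j, |u j| := by
    rw [← hid]
    apply mul_le_mul_of_nonneg_left _ hd.le
    linarith
  have h2 : (1 / (2 * n) : ℝ) * (∑ i, (X.mulVec w i + e i) ^ 2)
      ≤ (1 / (2 * n) : ℝ) * (∑ i, (X.mulVec w i + e i - X.mulVec u i) ^ 2)
        + μ * ∑ j, |u j| := by
    rw [hexp]
    have hdC : 0 ≤ (1 / (2 * (n : ℝ))) * (∑ i, (X.mulVec u i) ^ 2) :=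
      mul_nonneg hd.le hC
    have hring : (1 / (2 * (n : ℝ))) *
        ((∑ i, (X.mulVec w i + e i) ^ 2)
          - 2 * (∑ j, u j * ∑ i, X i j * (X.mulVec w i + e i))
          + ∑ i, (X.mulVec u i) ^ 2)
        = (1 / (2 * (n : ℝ))) * (∑ i, (X.mulVec w i + e i) ^ 2)
          - (1 / (2 * (n : ℝ))) * (2 * (∑ j, u j * ∑ i, X i j * (X.mulVec w i + e i)))
          + (1 / (2 * (n : ℝ))) * (∑ i, (X.mulVec u i) ^ 2) := by ring
    rw [hring]
    linarith
  -- hmin at 0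
  have h0 := hmin 0
  simp only [Matrix.mulVec_zero, Pi.zero_apply, sub_zero, abs_zero,
    Finset.sum_const_zero, mul_zero, add_zero] at h0
  -- hmin at u/2
  have hv2 := hmin (fun j => u j / 2)
  have hXv2 : ∀ i, X.mulVec (fun j => u j / 2) i = X.mulVec u i / 2 := by
    intro i
    rw [hmv _ i, hmv u i, Finset.sum_div]
    exact Finset.sum_congr rfl fun j _ => (mul_div_assoc _ _ _).symm
  have hsum2 : ∑ i, (X.mulVec w i + e i - X.mulVec (fun j => u j / 2) i) ^ 2
      = ((∑ i, (X.mulVec w i + e i - X.mulVec u i) ^ 2)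
          + ∑ i, (X.mulVec w i + e i) ^ 2) / 2
        - (∑ i, (X.mulVec u i) ^ 2) / 4 := by
    calc ∑ i, (X.mulVec w i + e i - X.mulVec (fun j => u j / 2) i) ^ 2
        = ∑ i, (((X.mulVec w i + e i - X.mulVec u i) ^ 2
            + (X.mulVec w i + e i) ^ 2) / 2 - (X.mulVec u i) ^ 2 / 4) :=
          Finset.sum_congr rfl fun i _ => by rw [hXv2 i]; ring
      _ = _ := by
          rw [Finset.sum_sub_distrib, ← Finset.sum_div, ← Finset.sum_div,
            Finset.sum_add_distrib]
  have habs2 : ∑ j, |u j / 2| = (∑ j, |u j|) / 2 := by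
    rw [Finset.sum_div]
    refine Finset.sum_congr rfl fun j _ => ?_
    rw [abs_div]; norm_num
  rw [hsum2, habs2] at hv2
  -- derive C ≤ 0
  have hring2 : (1 / (2 * (n : ℝ))) *
      (((∑ i, (X.mulVec w i + e i - X.mulVec u i) ^ 2)
          + ∑ i, (X.mulVec w i + e i) ^ 2) / 2
        - (∑ i, (X.mulVec u i) ^ 2) / 4)
      = (1 / (2 * (n : ℝ))) * (∑ i, (X.mulVec w i + e i - X.mulVec u i) ^ 2) / 2
        + (1 / (2 * (n : ℝ))) * (∑ i, (X.mulVec w i + e i) ^ 2) / 2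
        - (1 / (2 * (n : ℝ))) * (∑ i, (X.mulVec u i) ^ 2) / 4 := by ring
  rw [hring2] at hv2
  have hdC0 : (1 / (2 * (n : ℝ))) * (∑ i, (X.mulVec u i) ^ 2) ≤ 0 := by linarith
  have hCle : (∑ i, (X.mulVec u i) ^ 2) ≤ 0 := by
    by_contra h
    push_neg at h
    have := mul_pos hd h
    linarith
  have hC0 : (∑ i, (X.mulVec u i) ^ 2) = 0 := le_antisymm hCle hC
  have hXu : X.mulVec u = 0 := by
    funext i
    have := (Finset.sum_eq_zero_iff_of_nonneg (fun i _ => sq_nonneg (X.mulVec u i))).mp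
      hC0 i (Finset.mem_univ i)
    exact pow_eq_zero_iff two_ne_zero |>.mp this
  have hinj : Function.Injective (((1 : ℝ) / n) • (Xᵀ * X)).mulVec :=
    Matrix.mulVec_injective_iff_isUnit.mpr ((Matrix.isUnit_iff_isUnit_det _).mpr hQ)
  apply hinj
  rw [Matrix.mulVec_zero, Matrix.smul_mulVec, ← Matrix.mulVec_mulVec, hXu,
    Matrix.mulVec_zero, smul_zero]


/-- Heavy-regularization regime of the Lasso: if `μ ≥ 2M²‖𝐰‖₁`, then `ŵ = 0` with
probability at least `1 − 2p·exp(−nμ²/(8M²σ²(τ/σ)²))`. -/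
theorem stmt_13 {Ω : Type*} [MeasureSpace Ω] [IsProbabilityMeasure (ℙ : Measure Ω)]
    (n p : ℕ) (hn : 0 < n) (M τ σ : ℝ) (hM : 0 < M) (hτ : 0 < τ) (hσ : 0 < σ)
    (X : Matrix (Fin n) (Fin p) ℝ) (hX : ∀ i j, |X i j| ≤ M)
    (hQ : IsUnit (((1 : ℝ) / n) • (Xᵀ * X)).det)
    (w : Fin p → ℝ)
    (ε : Fin n → Ω → ℝ) (hmeas : ∀ i, Measurable (ε i))
    (hindep : iIndepFun ε ℙ)
    (hmean : ∀ i, ∫ ω, ε i ω ∂ℙ = 0)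
    (hint : ∀ i (s : ℝ), Integrable (fun ω => Real.exp (s * ε i ω)) ℙ)
    (hsub : ∀ i (s : ℝ), ∫ ω, Real.exp (s * ε i ω) ∂ℙ ≤ Real.exp (s ^ 2 * τ ^ 2 / 2))
    (hvar : ∀ i, σ ^ 2 ≤ variance (ε i) ℙ)
    (μ : ℝ) (hμ : 2 * M ^ 2 * (∑ j, |w j|) ≤ μ)
    (wh : Ω → Fin p → ℝ)
    (hwh : ∀ ω (v : Fin p → ℝ),
      (1 / (2 * n) : ℝ) * (∑ i, (X.mulVec w i + ε i ω - X.mulVec (wh ω) i) ^ 2)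
          + μ * ∑ j, |wh ω j| ≤
        (1 / (2 * n) : ℝ) * (∑ i, (X.mulVec w i + ε i ω - X.mulVec v i) ^ 2)
          + μ * ∑ j, |v j|) :
    1 - ENNReal.ofReal (2 * p *
        Real.exp (-(n * μ ^ 2) / (8 * M ^ 2 * σ ^ 2 * (τ / σ) ^ 2))) ≤
      ℙ {ω | wh ω = 0} := by
  have hμ0 : 0 ≤ μ := le_trans (by positivity) hμ
  have hσ' : (σ : ℝ) ≠ 0 := hσ.ne'
  rw [show (8 * M ^ 2 * σ ^ 2 * (τ / σ) ^ 2 : ℝ) = 8 * M ^ 2 * τ ^ 2 by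
    field_simp]
  set b := ENNReal.ofReal (Real.exp (-((n : ℝ) * μ ^ 2) / (8 * M ^ 2 * τ ^ 2))) with hb
  set E := {ω : Ω | ∀ j, |∑ i, X i j * ε i ω| ≤ (n : ℝ) * μ / 2} with hE
  have hsub_event : E ⊆ {ω | wh ω = 0} := by
    intro ω hω
    exact lasso_zero hn M hM X hX hQ w μ hμ (fun i => ε i ω) hω (wh ω) (fun v => hwh ω v)
  have hAj : ∀ j, ℙ {ω | (n : ℝ) * μ / 2 ≤ ∑ i, X i j * ε i ω} ≤ b := fun j =>
    tail_bound n M τ hM hτ ε hmeas hindep hint hsub (fun i => X i j)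
      (fun i => hX i j) μ hμ0
  have hBj : ∀ j, ℙ {ω | (n : ℝ) * μ / 2 ≤ -∑ i, X i j * ε i ω} ≤ b := by
    intro j
    have h := tail_bound n M τ hM hτ ε hmeas hindep hint hsub (fun i => -X i j)
      (fun i => by rw [abs_neg]; exact hX i j) μ hμ0
    simpa [neg_mul, Finset.sum_neg_distrib] using h
  have hcompl : Eᶜ ⊆ ⋃ j, ({ω | (n : ℝ) * μ / 2 ≤ ∑ i, X i j * ε i ω}
      ∪ {ω | (n : ℝ) * μ / 2 ≤ -∑ i, X i j * ε i ω}) := by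
    intro ω hω
    simp only [hE, Set.mem_compl_iff, Set.mem_setOf_eq, not_forall, not_le] at hω
    obtain ⟨j, hj⟩ := hω
    refine Set.mem_iUnion.mpr ⟨j, ?_⟩
    rcases le_abs.mp hj.le with h | h
    · exact Or.inl h
    · exact Or.inr h
  have hcount : ℙ Eᶜ ≤ ENNReal.ofReal (2 * p *
      Real.exp (-((n : ℝ) * μ ^ 2) / (8 * M ^ 2 * τ ^ 2))) := by
    calc ℙ Eᶜ ≤ ℙ (⋃ j, ({ω | (n : ℝ) * μ / 2 ≤ ∑ i, X i j * ε i ω}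
          ∪ {ω | (n : ℝ) * μ / 2 ≤ -∑ i, X i j * ε i ω})) := measure_mono hcompl
      _ ≤ ∑' (j : Fin p), ℙ ({ω | (n : ℝ) * μ / 2 ≤ ∑ i, X i j * ε i ω}
          ∪ {ω | (n : ℝ) * μ / 2 ≤ -∑ i, X i j * ε i ω}) := measure_iUnion_le _
      _ ≤ ∑' (_j : Fin p), (b + b) := ENNReal.tsum_le_tsum fun j =>
          (measure_union_le _ _).trans (add_le_add (hAj j) (hBj j))
      _ = (p : ENNReal) * (b + b) := by
          rw [tsum_fintype, Finset.sum_const, Finset.card_univ, Fintype.card_fin,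
            nsmul_eq_mul]
      _ = ENNReal.ofReal (2 * p *
          Real.exp (-((n : ℝ) * μ ^ 2) / (8 * M ^ 2 * τ ^ 2))) := by
          rw [hb, ← ENNReal.ofReal_add (Real.exp_nonneg _) (Real.exp_nonneg _),
            ← ENNReal.ofReal_natCast p, ← ENNReal.ofReal_mul (Nat.cast_nonneg p)]
          congr 1
          ring
  have h1 : (1 : ENNReal) ≤ ℙ E + ℙ Eᶜ := by
    calc (1 : ENNReal) = ℙ (E ∪ Eᶜ) := by rw [Set.union_compl_self, measure_univ]
      _ ≤ ℙ E + ℙ Eᶜ := measure_union_le _ _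
  calc 1 - ENNReal.ofReal (2 * p *
        Real.exp (-((n : ℝ) * μ ^ 2) / (8 * M ^ 2 * τ ^ 2))) ≤ ℙ E := by
        rw [tsub_le_iff_right]
        exact h1.trans (add_le_add_right hcount _)
    _ ≤ ℙ {ω | wh ω = 0} := measure_mono hsub_event
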